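/- Let A be a unital Banach algebra, G a group, w : G → A a group homomorphism into the invertible isometries of A, and τ : A → ℂ a continuous unital trace, such that: (i) the span of {w(g) : g ∈ G} is dense in A, (ii) τ(w(g)) = 0 for all g ≠ 1, and (iii) if a ∈ A satisfies τ(a·w(g)) = 0 for all g ∈ G then a = 0. Suppose further that for every finite set S ⊆ G∖{1} and every ε > 0 there exist n ∈ ℕ and h₁,…,hₙ ∈ G such that ‖(1/n)∑ⱼ w(hⱼ g hⱼ⁻¹)‖ < ε for all g ∈ S. Then A is simple (every nonzero two-sided ideal of A equals A). -/
import Mathlib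


/-- A reduced group Banach algebra with the Powers property is simple. -/
theorem powers_property_implies_simple
    {A : Type*} [NormedRing A] [NormOneClass A] [NormedAlgebra ℂ A] [CompleteSpace A]
    {G : Type*} [Group G] (w : G →* Aˣ)
    (hw : ∀ g : G, ‖((w g : Aˣ) : A)‖ = 1)
    (hw' : ∀ g : G, ‖(((w g)⁻¹ : Aˣ) : A)‖ = 1)
    (τ : A →L[ℂ] ℂ) (hτ1 : τ 1 = 1)
    (hτtr : ∀ a b : A, τ (a * b) = τ (b * a))
    (hdense :
      Dense ((Submodule.span ℂ (Set.range fun g : G => ((w g : Aˣ) : A)) : Submodule ℂ A) : Set A))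
    (hτw : ∀ g : G, g ≠ 1 → τ ((w g : Aˣ) : A) = 0)
    (hfaith : ∀ a : A, (∀ g : G, τ (a * ((w g : Aˣ) : A)) = 0) → a = 0)
    (hPowers : ∀ S : Finset G, (1 : G) ∉ S → ∀ ε : ℝ, 0 < ε →
      ∃ (n : ℕ) (h : Fin n → G), 0 < n ∧ ∀ g ∈ S,
        ‖(n : ℝ)⁻¹ • ∑ j : Fin n, ((w (h j * g * (h j)⁻¹) : Aˣ) : A)‖ < ε) :
    ∀ I : TwoSidedIdeal A, I ≠ ⊥ → I = ⊤ := by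
  classical
  intro I hI
  -- a nonzero element of I
  obtain ⟨a₀, ha₀I, ha₀⟩ : ∃ a ∈ I, a ≠ 0 := by
    by_contra hc; push_neg at hc
    exact hI (eq_bot_iff.2 fun x hx => (TwoSidedIdeal.mem_bot A).2 (hc x hx))
  obtain ⟨g₀, hg₀⟩ : ∃ g : G, τ (a₀ * ((w g : Aˣ) : A)) ≠ 0 := by
    by_contra hc; push_neg at hc; exact ha₀ (hfaith a₀ hc)
  set a : A := (τ (a₀ * ((w g₀ : Aˣ) : A)))⁻¹ • (a₀ * ((w g₀ : Aˣ) : A)) with ha_def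
  have haI : a ∈ I := by
    have h1 : a₀ * ((w g₀ : Aˣ) : A) ∈ I := I.mul_mem_right _ _ ha₀I
    have : a = ((τ (a₀ * ((w g₀ : Aˣ) : A)))⁻¹ • (1 : A)) * (a₀ * ((w g₀ : Aˣ) : A)) := by
      rw [smul_mul_assoc, one_mul]
    rw [this]; exact I.mul_mem_left _ _ h1
  have hτa : τ a = 1 := by
    rw [ha_def, map_smul, smul_eq_mul, inv_mul_cancel₀ hg₀]
  set C : ℝ := ‖τ‖ with hC
  have hC0 : (0:ℝ) ≤ C := norm_nonneg _
  set δ : ℝ := (4 * (C + 1))⁻¹ with hδdef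
  have hδ : 0 < δ := by positivity
  -- approximate a
  obtain ⟨b, hbmem, hab⟩ : ∃ b ∈ (Submodule.span ℂ
      (Set.range fun g : G => ((w g : Aˣ) : A)) : Submodule ℂ A), dist a b < δ := by
    have := Metric.mem_closure_iff.1 (hdense a) δ hδ
    simpa using this
  rw [dist_eq_norm] at hab
  obtain ⟨c, hcb⟩ : ∃ c : G →₀ ℂ, (c.sum fun g r => r • ((w g : Aˣ) : A)) = b :=
    Finsupp.mem_span_range_iff_exists_finsupp.1 hbmem
  set S : Finset G := c.support.erase 1 with hSdef
  have h1S : (1 : G) ∉ S := Finset.notMem_erase _ _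
  set M : ℝ := ∑ g ∈ S, ‖c g‖ with hM
  have hM0 : (0:ℝ) ≤ M := Finset.sum_nonneg fun _ _ => norm_nonneg _
  set ε : ℝ := (4 * (M + 1))⁻¹ with hεdef
  have hε : 0 < ε := by positivity
  obtain ⟨n, h, hn, hbd⟩ := hPowers S h1S ε hε
  have hn0 : (n : ℝ) ≠ 0 := Nat.cast_ne_zero.2 hn.ne'
  set y : G → A := fun g => (n : ℝ)⁻¹ • ∑ j : Fin n, ((w (h j * g * (h j)⁻¹) : Aˣ) : A)
    with hy
  set x : A := (n : ℝ)⁻¹ • ∑ j : Fin n,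
      ((w (h j) : Aˣ) : A) * a * (((w (h j))⁻¹ : Aˣ) : A) with hx
  set T1 : A := (n : ℝ)⁻¹ • ∑ j : Fin n,
      ((w (h j) : Aˣ) : A) * (a - b) * (((w (h j))⁻¹ : Aˣ) : A) with hT1def
  -- x is in I
  have hxI : x ∈ I := by
    have hsum : (∑ j : Fin n, ((w (h j) : Aˣ) : A) * a * (((w (h j))⁻¹ : Aˣ) : A)) ∈ I :=
      sum_mem fun j _ => I.mul_mem_right _ _ (I.mul_mem_left _ _ haI)
    have : x = ((n : ℝ)⁻¹ • (1 : A)) *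
        ∑ j : Fin n, ((w (h j) : Aˣ) : A) * a * (((w (h j))⁻¹ : Aˣ) : A) := by
      rw [smul_mul_assoc, one_mul]
    rw [this]; exact I.mul_mem_left _ _ hsum
  -- conjugation identity
  have hconj : ∀ (j : Fin n) (g : G), ((w (h j * g * (h j)⁻¹) : Aˣ) : A)
      = ((w (h j) : Aˣ) : A) * ((w g : Aˣ) : A) * (((w (h j))⁻¹ : Aˣ) : A) := by
    intro j g
    rw [map_mul, map_mul, map_inv, Units.val_mul, Units.val_mul]
  -- key decomposition
  have hbsum : b = ∑ g ∈ c.support, c g • ((w g : Aˣ) : A) := by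
    rw [← hcb]; rfl
  have key : x = T1 + (∑ g ∈ S, c g • y g) + c 1 • (1 : A) := by
    have step1 : ∀ j : Fin n, ((w (h j) : Aˣ) : A) * a * (((w (h j))⁻¹ : Aˣ) : A)
        = ((w (h j) : Aˣ) : A) * (a - b) * (((w (h j))⁻¹ : Aˣ) : A)
          + ∑ g ∈ c.support, c g • ((w (h j * g * (h j)⁻¹) : Aˣ) : A) := by
      intro j
      have : ∑ g ∈ c.support, c g • ((w (h j * g * (h j)⁻¹) : Aˣ) : A)
          = ((w (h j) : Aˣ) : A) * b * (((w (h j))⁻¹ : Aˣ) : A) := by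
        rw [hbsum, Finset.mul_sum, Finset.sum_mul]
        refine Finset.sum_congr rfl fun g _ => ?_
        rw [hconj, mul_smul_comm, smul_mul_assoc]
      rw [this]; noncomm_ring
    have step2 : x = T1 + ∑ g ∈ c.support, c g • y g := by
      rw [hx, hT1def]
      simp only [step1, Finset.sum_add_distrib, smul_add]
      congr 1
      rw [Finset.sum_comm, Finset.smul_sum]
      refine Finset.sum_congr rfl fun g _ => ?_
      simp only [hy]
      rw [← Finset.smul_sum, smul_comm]
    have hy1 : y 1 = 1 := by
      rw [hy]
      simp only [mul_one, mul_inv_cancel, map_one, Units.val_one]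
      rw [Finset.sum_const, Finset.card_univ, Fintype.card_fin,
        ← Nat.cast_smul_eq_nsmul ℝ, smul_smul, inv_mul_cancel₀ hn0, one_smul]
    have step3 : ∑ g ∈ c.support, c g • y g = (∑ g ∈ S, c g • y g) + c 1 • (1 : A) := by
      have hsub : c.support ⊆ insert (1 : G) S := by
        intro g hg
        by_cases hg1 : g = 1
        · exact hg1 ▸ Finset.mem_insert_self _ _
        · exact Finset.mem_insert_of_mem (Finset.mem_erase.2 ⟨hg1, hg⟩)
      rw [Finset.sum_subset hsub (fun g _ hg => by
        rw [Finsupp.notMem_support_iff.1 hg, zero_smul])]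
      rw [Finset.sum_insert h1S, hy1, add_comm]
    rw [step2, step3, add_assoc]
  -- norm estimates
  have hT1bd : ‖T1‖ ≤ ‖a - b‖ := by
    rw [hT1def, norm_smul]
    have hterm : ∀ j : Fin n,
        ‖((w (h j) : Aˣ) : A) * (a - b) * (((w (h j))⁻¹ : Aˣ) : A)‖ ≤ ‖a - b‖ := by
      intro j
      calc ‖((w (h j) : Aˣ) : A) * (a - b) * (((w (h j))⁻¹ : Aˣ) : A)‖
          ≤ ‖((w (h j) : Aˣ) : A) * (a - b)‖ * ‖(((w (h j))⁻¹ : Aˣ) : A)‖ := norm_mul_le _ _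
        _ ≤ ‖((w (h j) : Aˣ) : A)‖ * ‖a - b‖ * ‖(((w (h j))⁻¹ : Aˣ) : A)‖ := by
            gcongr; exact norm_mul_le _ _
        _ = ‖a - b‖ := by rw [hw, hw', one_mul, mul_one]
    calc ‖(n:ℝ)⁻¹‖ * ‖∑ j : Fin n,
          ((w (h j) : Aˣ) : A) * (a - b) * (((w (h j))⁻¹ : Aˣ) : A)‖
        ≤ ‖(n:ℝ)⁻¹‖ * ∑ j : Fin n, ‖a - b‖ := by
          gcongr
          exact (norm_sum_le _ _).trans (Finset.sum_le_sum fun j _ => hterm j)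
      _ = ‖a - b‖ := by
          rw [Finset.sum_const, Finset.card_univ, Fintype.card_fin, nsmul_eq_mul,
            Real.norm_eq_abs, abs_of_pos (by positivity : (0:ℝ) < (n:ℝ)⁻¹)]
          field_simp
  have hT2bd : ‖∑ g ∈ S, c g • y g‖ ≤ M * ε := by
    calc ‖∑ g ∈ S, c g • y g‖ ≤ ∑ g ∈ S, ‖c g • y g‖ := norm_sum_le _ _
      _ ≤ ∑ g ∈ S, ‖c g‖ * ε := by
          refine Finset.sum_le_sum fun g hg => ?_
          rw [norm_smul]
          exact mul_le_mul_of_nonneg_left (hbd g hg).le (norm_nonneg _)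
      _ = M * ε := by rw [hM, Finset.sum_mul]
  have hc1 : c 1 = τ b := by
    rw [hbsum, map_sum]
    simp only [map_smul, smul_eq_mul]
    rw [Finset.sum_eq_single (1 : G)]
    · rw [show w (1:G) = 1 from map_one w, Units.val_one, hτ1, mul_one]
    · intro g hg hg1
      rw [hτw g hg1, mul_zero]
    · intro h1
      rw [Finsupp.notMem_support_iff.1 h1, zero_mul]
  have hT3bd : ‖c 1 - 1‖ ≤ C * ‖a - b‖ := by
    have : c 1 - 1 = τ (b - a) := by
      rw [map_sub, hτa, hc1]
    rw [this]
    calc ‖τ (b - a)‖ ≤ ‖τ‖ * ‖b - a‖ := τ.le_opNorm _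
      _ = C * ‖a - b‖ := by rw [norm_sub_rev, hC]
  -- combine
  have hxnorm : ‖x - 1‖ < 1 := by
    have hdecomp : x - 1 = T1 + (∑ g ∈ S, c g • y g) + (c 1 - 1) • (1 : A) := by
      rw [key, sub_smul, one_smul]; abel
    have h3 : ‖(c 1 - 1) • (1 : A)‖ ≤ C * δ := by
      rw [norm_smul, norm_one, mul_one]
      exact hT3bd.trans (by nlinarith [hab.le])
    have h1 : ‖T1‖ ≤ δ := hT1bd.trans hab.le
    have hMε : M * ε < 4⁻¹ := by
      rw [hεdef]
      rw [mul_inv_lt_iff₀' (by positivity)]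
      nlinarith
    have hCδ : δ + C * δ = 4⁻¹ := by
      rw [hδdef]
      field_simp
      ring
    calc ‖x - 1‖ ≤ ‖T1‖ + ‖∑ g ∈ S, c g • y g‖ + ‖(c 1 - 1) • (1 : A)‖ := by
          rw [hdecomp]; exact (norm_add_le _ _).trans (by gcongr; exact norm_add_le _ _)
      _ < 1 := by nlinarith
  -- conclude
  have hxunit : IsUnit x := by
    have h' : ‖1 - x‖ < 1 := by rwa [norm_sub_rev]
    exact ⟨Units.oneSub (1 - x) h', by simp [Units.oneSub]⟩
  obtain ⟨u, hu⟩ := hxunit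
  have h1 := I.mul_mem_left (↑u⁻¹) _ hxI
  rw [← hu, Units.inv_mul] at h1
  exact TwoSidedIdeal.eq_top _ h1
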